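/- Let (M,d) be a non-compact proper metric space and W ⊆ M a subset containing metric balls of arbitrarily large radius. Then the closure of W in the Higson compactification M^ν is a neighborhood of some point of the Higson corona νM = M^ν \ M. -/

import Mathlib

open Metric Filter Topology Set

/-- Auxiliary recursively-defined sequence of ball centers. -/
noncomputable def higsonSeqAux {M : Type*} [MetricSpace M] (o : M) (g : ℝ → ℕ → M) : ℕ → M
  | 0 => o
  | (k+1) => g (max (dist o (higsonSeqAux o g k)) (k+1)) (k+1)

lemma higson_ciSup_le_ciSup_add {u v : ℕ → ℝ} (bv : BddAbove (Set.range v)) {L : ℝ}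
    (h : ∀ k, u k ≤ v k + L) : (⨆ k, u k) ≤ (⨆ k, v k) + L :=
  ciSup_le fun k => (h k).trans (add_le_add (le_ciSup bv k) le_rfl)

lemma higson_abs_ciSup_sub_ciSup_le {u v : ℕ → ℝ} (hu : ∀ k, u k ≤ 1) (hv : ∀ k, v k ≤ 1)
    {L : ℝ} (h : ∀ k, |u k - v k| ≤ L) :
    |(⨆ k, u k) - ⨆ k, v k| ≤ L := by
  have bu : BddAbove (Set.range u) := ⟨1, by rintro _ ⟨k, rfl⟩; exact hu k⟩
  have bv : BddAbove (Set.range v) := ⟨1, by rintro _ ⟨k, rfl⟩; exact hv k⟩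
  rw [abs_sub_le_iff]
  constructor
  · have := higson_ciSup_le_ciSup_add bv (L := L) (u := u) fun k => by
      have := (abs_sub_le_iff.1 (h k)).1; linarith
    linarith
  · have := higson_ciSup_le_ciSup_add bu (L := L) (u := v) fun k => by
      have := (abs_sub_le_iff.1 (h k)).2; linarith
    linarith

lemma higson_dist_ofReal (a b : ℝ) : dist (a : ℂ) (b : ℂ) = |a - b| := by
  rw [Complex.dist_eq, ← Complex.ofReal_sub, Complex.norm_real, Real.norm_eq_abs]

/-- A bounded continuous function `f` on a metric space `M` is a Higson function if for every
`r > 0` its `r`-expansion `∇_r f (x) = sup {|f x − f y| : dist x y ≤ r}` vanishes at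
infinity. -/
def IsHigsonFunction {M : Type*} [MetricSpace M] (f : M → ℂ) : Prop :=
  ∀ r : ℝ, 0 < r → ∀ ε : ℝ, 0 < ε → ∃ K : Set M, IsCompact K ∧
    ∀ x ∉ K, ∀ y : M, dist x y ≤ r → dist (f x) (f y) < ε

/-- `(X, e)` is the Higson compactification of `M`: a compactification of `M` such that the
bounded continuous functions on `M` extending continuously to `X` are exactly the continuous
Higson functions. -/
structure IsHigsonCompactification (M : Type*) [MetricSpace M] (X : Type*)
    [TopologicalSpace X] [CompactSpace X] [T2Space X] (e : M → X) : Prop where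
  embedding : Topology.IsEmbedding e
  dense : DenseRange e
  higson : ∀ f : BoundedContinuousFunction M ℂ,
    (∃ g : C(X, ℂ), ∀ x : M, g (e x) = f x) ↔ IsHigsonFunction f

/-- If `M` is a non-compact proper metric space and `W ⊆ M` contains metric balls of
arbitrarily large radius, then the closure of `W` in the Higson compactification `M^ν` is a
neighborhood of some point of the Higson corona `νM = M^ν \ M`. -/
theorem closure_nhd_of_corona_point {M : Type*} [MetricSpace M] [ProperSpace M]
    (hnc : ¬ CompactSpace M)
    {X : Type*} [TopologicalSpace X] [CompactSpace X] [T2Space X] {e : M → X}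
    (h : IsHigsonCompactification M X e)
    (W : Set M) (hW : ∀ r : ℝ, 0 < r → ∃ x : M, Metric.ball x r ⊆ W) :
    ∃ p : X, p ∉ Set.range e ∧ closure (e '' W) ∈ nhds p := by
  classical
  have hM : Nonempty M := by
    by_contra hM
    rw [not_nonempty_iff] at hM
    exact hnc inferInstance
  obtain ⟨o⟩ := hM
  by_cases hcase : ∀ C : ℝ, ∀ n : ℕ, ∃ x : M, C < dist o x ∧ Metric.ball x n ⊆ W
  · -- main case: centers escape to infinity
    choose g hg1 hg2 using hcase
    set c : ℕ → M := higsonSeqAux o g with hcdef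
    have hstep : ∀ k : ℕ, c (k+1) = g (max (dist o (c k)) ((k:ℝ)+1)) (k+1) := by
      intro k
      show higsonSeqAux o g (k+1) = _
      rw [higsonSeqAux]
    have hA : StrictMono (fun k => dist o (c k)) := by
      apply strictMono_nat_of_lt_succ
      intro k
      rw [hstep k]
      exact lt_of_le_of_lt (le_max_left _ _) (hg1 _ _)
    have hAk : ∀ k : ℕ, (k:ℝ)+1 < dist o (c (k+1)) := by
      intro k
      rw [hstep k]
      exact lt_of_le_of_lt (le_max_right _ _) (hg1 _ _)
    have hball : ∀ k : ℕ, Metric.ball (c (k+1)) ((k:ℝ)+1) ⊆ W := by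
      intro k
      rw [hstep k]
      have := hg2 (max (dist o (c k)) ((k:ℝ)+1)) (k+1)
      push_cast at this
      exact this
    -- the bump functions
    set b : ℕ → M → ℝ := fun j x => max 0 (1 - dist x (c (j+1)) / ((j:ℝ)+1)) with hbdef
    have hjpos : ∀ j : ℕ, (0:ℝ) < (j:ℝ)+1 := fun j => by positivity
    have hb0 : ∀ (j : ℕ) (x : M), 0 ≤ b j x := fun j x => le_max_left _ _
    have hb1 : ∀ (j : ℕ) (x : M), b j x ≤ 1 := fun j x => by
      apply max_le zero_le_one
      have : 0 ≤ dist x (c (j+1)) / ((j:ℝ)+1) := by positivity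
      linarith
    have hbzero : ∀ (j : ℕ) (x : M), (j:ℝ)+1 ≤ dist x (c (j+1)) → b j x = 0 := by
      intro j x hx
      apply max_eq_left
      rw [sub_nonpos, le_div_iff₀ (hjpos j), one_mul]
      exact hx
    have hblip : ∀ (j : ℕ) (x y : M), |b j x - b j y| ≤ dist x y / ((j:ℝ)+1) := by
      intro j x y
      have h1 : |b j x - b j y| ≤
          |(1 - dist x (c (j+1)) / ((j:ℝ)+1)) - (1 - dist y (c (j+1)) / ((j:ℝ)+1))| := by
        rw [hbdef]
        simp only []
        rw [max_comm 0 _, max_comm 0 _]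
        exact abs_max_sub_max_le_abs _ _ _
      have h2 : (1 - dist x (c (j+1)) / ((j:ℝ)+1)) - (1 - dist y (c (j+1)) / ((j:ℝ)+1))
          = (dist y (c (j+1)) - dist x (c (j+1))) / ((j:ℝ)+1) := by ring
      rw [h2] at h1
      refine h1.trans ?_
      rw [abs_div, abs_of_pos (hjpos j)]
      have h3 : |dist y (c (j+1)) - dist x (c (j+1))| ≤ dist x y := by
        rw [dist_comm x y]; exact abs_dist_sub_le _ _ _
      gcongr
    -- the Higson function f
    set f : M → ℝ := fun x => ⨆ j, b j x with hfdef
    have hbdd : ∀ x : M, BddAbove (Set.range (b · x)) :=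
      fun x => ⟨1, by rintro _ ⟨j, rfl⟩; exact hb1 j x⟩
    have hf0 : ∀ x, 0 ≤ f x := fun x => (hb0 0 x).trans (le_ciSup (hbdd x) 0)
    have hf1 : ∀ x, f x ≤ 1 := fun x => ciSup_le fun j => hb1 j x
    have hfc : ∀ k : ℕ, f (c (k+1)) = 1 := by
      intro k
      refine le_antisymm (hf1 _) ?_
      have hbk : b k (c (k+1)) = 1 := by
        rw [hbdef]
        simp [dist_self]
      calc (1:ℝ) = b k (c (k+1)) := hbk.symm
        _ ≤ f (c (k+1)) := le_ciSup (hbdd _) k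
    have hfW : ∀ x, x ∉ W → f x = 0 := by
      intro x hx
      refine le_antisymm (ciSup_le fun j => ?_) (hf0 x)
      refine (hbzero j x ?_).le
      by_contra hd
      push_neg at hd
      exact hx (hball j (Metric.mem_ball.2 hd))
    have hflip : ∀ x y : M, |f x - f y| ≤ dist x y := by
      intro x y
      refine higson_abs_ciSup_sub_ciSup_le (fun j => hb1 j x) (fun j => hb1 j y) fun j => ?_
      refine (hblip j x y).trans ?_
      exact div_le_self dist_nonneg (by push_cast; linarith [Nat.cast_nonneg (α := ℝ) j])
    have hlip : LipschitzWith 1 f := by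
      apply LipschitzWith.of_dist_le_mul
      intro x y
      rw [Real.dist_eq, NNReal.coe_one, one_mul]
      exact hflip x y
    set F : BoundedContinuousFunction M ℂ :=
      ⟨⟨fun x => (f x : ℂ), Complex.continuous_ofReal.comp hlip.continuous⟩, 2, fun x y => by
        simp only [ContinuousMap.coe_mk]
        rw [higson_dist_ofReal]
        have := hf0 x; have := hf1 x; have := hf0 y; have := hf1 y
        rw [abs_le]; constructor <;> linarith⟩ with hFdef
    have hFx : ∀ x : M, F x = (f x : ℂ) := fun x => rfl
    have hhig : IsHigsonFunction F := by
      intro r hr ε hε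
      obtain ⟨n, hn⟩ := exists_nat_gt (r / ε)
      refine ⟨Metric.closedBall o (dist o (c (n+1)) + ((n:ℝ)+1) + r),
        isCompact_closedBall o _, ?_⟩
      intro x hx y hxy
      rw [Metric.mem_closedBall, not_le] at hx
      have hdx : dist o (c (n+1)) + ((n:ℝ)+1) + r < dist o x := by
        rw [dist_comm o x]; exact hx
      have hdy : dist o (c (n+1)) + ((n:ℝ)+1) < dist o y := by
        have h1 : dist o x ≤ dist o y + dist x y := by
          rw [dist_comm x y]; exact dist_triangle o y x
        linarith
      have key : ∀ j : ℕ, |b j x - b j y| ≤ r / ((n:ℝ)+1) := by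
        intro j
        rcases le_or_gt j n with hj | hj
        · have hcj : dist o (c (j+1)) ≤ dist o (c (n+1)) := hA.monotone (by omega)
          have hjn : (j:ℝ) ≤ (n:ℝ) := Nat.cast_le.2 hj
          have hzx : b j x = 0 := by
            refine hbzero j x ?_
            have h1 : dist o x ≤ dist o (c (j+1)) + dist x (c (j+1)) := by
              rw [dist_comm x (c (j+1))]; exact dist_triangle o (c (j+1)) x
            linarith
          have hzy : b j y = 0 := by
            refine hbzero j y ?_
            have h1 : dist o y ≤ dist o (c (j+1)) + dist y (c (j+1)) := by
              rw [dist_comm y (c (j+1))]; exact dist_triangle o (c (j+1)) y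
            linarith
          rw [hzx, hzy, sub_zero, abs_zero]
          positivity
        · refine (hblip j x y).trans ?_
          have hnj : (n:ℝ)+1 ≤ (j:ℝ)+1 := by
            have : (n:ℝ) ≤ (j:ℝ) := Nat.cast_le.2 hj.le
            linarith
          exact div_le_div₀ hr.le hxy (hjpos n) hnj
      have hsup : |f x - f y| ≤ r / ((n:ℝ)+1) :=
        higson_abs_ciSup_sub_ciSup_le (fun j => hb1 j x) (fun j => hb1 j y) key
      calc dist (F x) (F y) = |f x - f y| := by
            rw [hFx, hFx, higson_dist_ofReal]
        _ ≤ r / ((n:ℝ)+1) := hsup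
        _ < ε := by
            rw [div_lt_iff₀ (hjpos n)]
            rw [div_lt_iff₀ hε] at hn
            nlinarith
    obtain ⟨g', hg'⟩ := (h.higson F).2 hhig
    -- cluster point of the sequence of centers
    set u : ℕ → X := fun k => e (c (k+1)) with hudef
    obtain ⟨p, hp⟩ := exists_clusterPt_of_compactSpace (map u atTop)
    have htail : ∀ N : ℕ, p ∈ closure (u '' Set.Ici N) := by
      intro N
      have hmem : u '' Set.Ici N ∈ map u atTop := image_mem_map (mem_atTop N)
      exact mem_closure_iff_clusterPt.2 (hp.mono (le_principal_iff.2 hmem))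
    have hgp : g' p = 1 := by
      have h1 : p ∈ closure (Set.range u) := by
        refine closure_mono ?_ (htail 0)
        rintro _ ⟨k, _, rfl⟩
        exact ⟨k, rfl⟩
      have h2 : g' p ∈ closure (g' '' Set.range u) :=
        image_closure_subset_closure_image g'.continuous ⟨p, h1, rfl⟩
      have h3 : g' '' Set.range u ⊆ {(1:ℂ)} := by
        rintro _ ⟨_, ⟨k, rfl⟩, rfl⟩
        have := hg' (c (k+1))
        rw [hFx, hfc k] at this
        simp [hudef, this]
      have h4 := closure_mono h3 h2
      rw [closure_singleton] at h4
      exact h4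
    have hpe : p ∉ Set.range e := by
      rintro ⟨m, rfl⟩
      obtain ⟨N, hN⟩ := exists_nat_gt (dist o m)
      have hsub : u '' Set.Ici N ⊆ e '' {x : M | dist o m + 1 ≤ dist o x} := by
        rintro _ ⟨k, hk, rfl⟩
        refine ⟨c (k+1), ?_, rfl⟩
        have h1 : (k:ℝ)+1 < dist o (c (k+1)) := hAk k
        have h2 : (N:ℝ) ≤ (k:ℝ) := Nat.cast_le.2 hk
        simp only [Set.mem_setOf_eq]
        linarith
      have hm : e m ∈ closure (e '' {x : M | dist o m + 1 ≤ dist o x}) :=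
        closure_mono hsub (htail N)
      have hmem : m ∈ closure {x : M | dist o m + 1 ≤ dist o x} := by
        rw [h.embedding.closure_eq_preimage_closure_image]
        exact hm
      have hclosed : IsClosed {x : M | dist o m + 1 ≤ dist o x} :=
        isClosed_le continuous_const (continuous_const.dist continuous_id)
      rw [hclosed.closure_eq] at hmem
      simp only [Set.mem_setOf_eq] at hmem
      linarith
    refine ⟨p, hpe, ?_⟩
    have hUopen : IsOpen (g' ⁻¹' Metric.ball (1:ℂ) (1/2)) :=
      Metric.isOpen_ball.preimage g'.continuous
    have hpU : p ∈ g' ⁻¹' Metric.ball (1:ℂ) (1/2) := by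
      simp [Set.mem_preimage, Metric.mem_ball, hgp]
    refine mem_nhds_iff.2 ⟨_, ?_, hUopen, hpU⟩
    intro q hq
    rw [_root_.mem_closure_iff]
    intro V hV hqV
    have hne : (V ∩ g' ⁻¹' Metric.ball (1:ℂ) (1/2)).Nonempty := ⟨q, hqV, hq⟩
    obtain ⟨x, hx⟩ := h.dense.exists_mem_open (hV.inter hUopen) hne
    refine ⟨e x, hx.1, x, ?_, rfl⟩
    by_contra hxW
    have hfx : f x = 0 := hfW x hxW
    have hx2 : dist (g' (e x)) 1 < 1/2 := hx.2
    rw [hg' x, hFx, hfx] at hx2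
    norm_num at hx2
  · -- degenerate case: W = univ
    push_neg at hcase
    obtain ⟨C, n, hCn⟩ := hcase
    have hWu : W = Set.univ := by
      rw [eq_univ_iff_forall]
      intro y
      have hrpos : (0:ℝ) < max (n:ℝ) (|C| + dist o y + 1) :=
        lt_of_lt_of_le (by positivity) (le_max_right _ _)
      obtain ⟨x, hx⟩ := hW (max (n:ℝ) (|C| + dist o y + 1)) hrpos
      have hxC : dist o x ≤ C := by
        by_contra hc
        exact hCn x (lt_of_not_ge hc) ((Metric.ball_subset_ball (le_max_left _ _)).trans hx)
      apply hx
      rw [Metric.mem_ball]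
      have h1 : dist y x ≤ dist o y + dist o x := by
        rw [dist_comm o y]; exact dist_triangle y o x
      have h2 : C ≤ |C| := le_abs_self C
      calc dist y x ≤ |C| + dist o y := by linarith
        _ < |C| + dist o y + 1 := by linarith
        _ ≤ max (n:ℝ) (|C| + dist o y + 1) := le_max_right _ _
    have hpe : ∃ p : X, p ∉ Set.range e := by
      by_contra hp
      push_neg at hp
      have hre : Set.range e = Set.univ := eq_univ_iff_forall.2 hp
      apply hnc
      rw [← isCompact_univ_iff, h.embedding.isCompact_iff, image_univ, hre]
      exact isCompact_univ
    obtain ⟨p, hp⟩ := hpe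
    refine ⟨p, hp, ?_⟩
    rw [hWu, image_univ, h.dense.closure_range]
    exact univ_mem
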